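/- Let 0 < p < ∞, α ∈ ℝ, r > 0 and f ∈ L²_loc(ℂ, dA). Then ‖ρ^α · MO_{2,r}(f)‖_{L^p(ℂ,dA)} < ∞ if and only if there exists a continuous function c : ℂ → ℂ such that the function z ↦ ρ(z)^α · (|D^r(z)|^{-1} ∫_{D^r(z)} |f(w) − c(z)|² dA(w))^{1/2} belongs to L^p(ℂ, dA). -/

import Mathlib

open MeasureTheory Metric Complex ENNReal Set

noncomputable section

/-- The Laplacian `Δφ = ∂²φ/∂x² + ∂²φ/∂y²`. -/
def lapl (φ : ℂ → ℝ) (z : ℂ) : ℝ :=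
  fderiv ℝ (fun w => fderiv ℝ φ w 1) z 1 + fderiv ℝ (fun w => fderiv ℝ φ w Complex.I) z Complex.I

/-- The measure `μ = Δφ · dA`. -/
def muOf (φ : ℂ → ℝ) : Measure ℂ :=
  MeasureTheory.volume.withDensity fun z => ENNReal.ofReal (lapl φ z)

/-- `(|D^r(z)|⁻¹ ∫_{D^r(z)} |g|^q dA)^{1/q}`, valued in `ℝ≥0∞`, where `D^r(z) = D(z, r·ρ(z))`. -/
def avgq (ρ : ℂ → ℝ) (q r : ℝ) (g : ℂ → ℂ) (z : ℂ) : ℝ≥0∞ :=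
  ((∫⁻ w in ball z (r * ρ z), ENNReal.ofReal (‖g w‖ ^ q)) / volume (ball z (r * ρ z))) ^ (1 / q)

/-- `G_{q,r}(f)(z)`: the integral distance to holomorphic functions on `D^r(z)`. -/
def Gqr (ρ : ℂ → ℝ) (q r : ℝ) (f : ℂ → ℂ) (z : ℂ) : ℝ≥0∞ :=
  ⨅ (h : ℂ → ℂ) (_ : DifferentiableOn ℂ h (ball z (r * ρ z))),
    avgq ρ q r (fun w => f w - h w) z

/-- The `L^p(ℂ, dA)`-norm (`0 < p < ∞`) of an `ℝ≥0∞`-valued function. -/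
def lpN (p : ℝ) (g : ℂ → ℝ≥0∞) : ℝ≥0∞ := (∫⁻ z, g z ^ p) ^ (1 / p)

/-- The mean `f̂_r(z) = |D^r(z)|⁻¹ ∫_{D^r(z)} f dA`. -/
def avgC (ρ : ℂ → ℝ) (r : ℝ) (f : ℂ → ℂ) (z : ℂ) : ℂ :=
  ((volume (ball z (r * ρ z))).toReal)⁻¹ • ∫ w in ball z (r * ρ z), f w

/-- `MO_{2,r}(f)(z) = (|D^r(z)|⁻¹ ∫_{D^r(z)} |f − f̂_r(z)|² dA)^{1/2}`. -/
def MO2 (ρ : ℂ → ℝ) (r : ℝ) (f : ℂ → ℂ) (z : ℂ) : ℝ≥0∞ :=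
  avgq ρ 2 r (fun w => f w - avgC ρ r f z) z


section Aux
open Filter

private lemma aux_pos (μ : Measure ℂ) (hne : μ ≠ 0) (C₀ : ℝ≥0∞)
    (hdbl : ∀ (z : ℂ) (s : ℝ), 0 < s → μ (ball z (2 * s)) ≤ C₀ * μ (ball z s)) :
    ∀ (z : ℂ) (s : ℝ), 0 < s → 0 < μ (ball z s) := by
  intro z s hs
  by_contra h
  push_neg at h
  have h0 : μ (ball z s) = 0 := le_antisymm h zero_le
  have hn : ∀ n : ℕ, μ (ball z (2 ^ n * s)) = 0 := by
    intro n
    induction n with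
    | zero => simpa using h0
    | succ k ih =>
      have : (2:ℝ) ^ (k+1) * s = 2 * (2 ^ k * s) := by ring
      rw [this]
      have := hdbl z (2 ^ k * s) (by positivity)
      simpa [ih] using this
  apply hne
  rw [← Measure.measure_univ_eq_zero]
  have : (Set.univ : Set ℂ) ⊆ ⋃ n : ℕ, ball z (2 ^ n * s) := by
    intro w _
    obtain ⟨n, hn'⟩ := pow_unbounded_of_one_lt (dist w z / s) (one_lt_two (α := ℝ))
    exact mem_iUnion.mpr ⟨n, by simp only [mem_ball]; rw [div_lt_iff₀ hs] at hn'; linarith⟩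
  exact le_antisymm (le_trans (measure_mono this)
    (le_of_eq (measure_iUnion_null fun n => hn n))) zero_le

private lemma aux_annulus (μ : Measure ℂ) (hpos : ∀ (z : ℂ) (s : ℝ), 0 < s → 0 < μ (ball z s))
    (z : ℂ) {a e : ℝ} (ha : 0 ≤ a) (he : 0 < e) (hfin : μ (ball z a) ≠ ⊤) :
    μ (ball z a) < μ (ball z (a + e)) := by
  set c : ℂ := z + ((a + e/2 : ℝ) : ℂ) with hc
  have hdist : dist c z = a + e / 2 := by
    rw [dist_eq_norm]
    have : c - z = ((a + e/2 : ℝ) : ℂ) := by rw [hc]; ring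
    rw [this, Complex.norm_real, Real.norm_eq_abs,
      _root_.abs_of_nonneg (by linarith : (0:ℝ) ≤ a + e/2)]
  have hsub : ball z a ∪ ball c (e/2) ⊆ ball z (a + e) := by
    rintro w (hw | hw)
    · exact ball_subset_ball (by linarith) hw
    · rw [mem_ball] at hw ⊢
      calc dist w z ≤ dist w c + dist c z := dist_triangle _ _ _
        _ < e/2 + (a + e/2) := by rw [hdist]; linarith
        _ = a + e := by ring
  have hdisj : Disjoint (ball z a) (ball c (e/2)) := by
    rw [Set.disjoint_left]
    intro w hw hw'
    rw [mem_ball] at hw hw'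
    have : a + e/2 ≤ dist w c + dist w z := by
      rw [← hdist]
      calc dist c z ≤ dist c w + dist w z := dist_triangle _ _ _
        _ = dist w c + dist w z := by rw [dist_comm c w]
    linarith
  calc μ (ball z a) < μ (ball z a) + μ (ball c (e/2)) :=
        ENNReal.lt_add_right hfin (hpos c (e/2) (by linarith)).ne'
    _ = μ (ball z a ∪ ball c (e/2)) := (measure_union hdisj measurableSet_ball).symm
    _ ≤ μ (ball z (a + e)) := measure_mono hsub

private lemma aux_rho_cont (μ : Measure ℂ) (hpos : ∀ (z : ℂ) (s : ℝ), 0 < s → 0 < μ (ball z s))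
    (ρ : ℂ → ℝ) (hρ : ∀ z, 0 < ρ z ∧ μ (ball z (ρ z)) = 1) : Continuous ρ := by
  rw [continuous_iff_continuousAt]
  intro z₀
  rw [Metric.continuousAt_iff]
  intro ε hε
  set δ := min ε (ρ z₀) / 4 with hδdef
  have hδ : 0 < δ := by
    have := (hρ z₀).1
    positivity
  have hδρ : δ ≤ ρ z₀ / 4 := by
    apply div_le_div_of_nonneg_right ?_ ?_ <;> first | exact min_le_right _ _ | norm_num
  refine ⟨δ, hδ, fun {z} hz => ?_⟩
  have h1 : ρ z < ρ z₀ + 2 * δ := by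
    have hgt : 1 < μ (ball z₀ (ρ z₀ + δ)) := by
      have := aux_annulus μ hpos z₀ (le_of_lt (hρ z₀).1) hδ (by rw [(hρ z₀).2]; exact one_ne_top)
      rwa [(hρ z₀).2] at this
    have hsub : ball z₀ (ρ z₀ + δ) ⊆ ball z (ρ z₀ + 2 * δ) := by
      apply ball_subset_ball'
      rw [dist_comm]
      linarith [hz]
    have hgt2 : 1 < μ (ball z (ρ z₀ + 2 * δ)) := lt_of_lt_of_le hgt (measure_mono hsub)
    by_contra h
    push_neg at h
    have : μ (ball z (ρ z₀ + 2 * δ)) ≤ 1 := by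
      rw [← (hρ z).2]; exact measure_mono (ball_subset_ball h)
    exact absurd this (not_le_of_gt hgt2)
  have h2 : ρ z₀ - 2 * δ < ρ z := by
    have hlt : μ (ball z₀ (ρ z₀ - δ)) < 1 := by
      have := aux_annulus μ hpos z₀ (a := ρ z₀ - δ) (e := δ) (by linarith [(hρ z₀).1]) hδ ?_
      · rw [show ρ z₀ - δ + δ = ρ z₀ by ring, (hρ z₀).2] at this
        exact this
      · refine ne_top_of_le_ne_top one_ne_top ?_
        rw [← (hρ z₀).2]
        exact measure_mono (ball_subset_ball (by linarith))
    have hsub : ball z (ρ z₀ - 2 * δ) ⊆ ball z₀ (ρ z₀ - δ) := by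
      apply ball_subset_ball'
      linarith [hz]
    have hlt2 : μ (ball z (ρ z₀ - 2 * δ)) < 1 := lt_of_le_of_lt (measure_mono hsub) hlt
    by_contra h
    push_neg at h
    have : (1:ℝ≥0∞) ≤ μ (ball z (ρ z₀ - 2 * δ)) := by
      rw [← (hρ z).2]; exact measure_mono (ball_subset_ball h)
    exact absurd this (not_le_of_gt hlt2)
  rw [Real.dist_eq, abs_sub_lt_iff]
  constructor <;> [skip; skip] <;>
    · have : 2 * δ ≤ ε / 2 := by
        have : δ ≤ ε / 4 := by
          apply div_le_div_of_nonneg_right (min_le_left _ _) (by norm_num)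
        linarith
      linarith

private lemma aux_intOn (f : ℂ → ℂ) (hfm : AEStronglyMeasurable f MeasureTheory.volume)
    (hfl : ∀ (z : ℂ) (s : ℝ), 0 < s →
      (∫⁻ w in ball z s, ENNReal.ofReal (‖f w‖ ^ (2 : ℝ))) < ⊤)
    (z : ℂ) (s : ℝ) (hs : 0 < s) : IntegrableOn f (ball z s) := by
  haveI : Fact (volume (ball z s) < ⊤) := ⟨measure_ball_lt_top⟩
  have hm : MemLp f 2 (volume.restrict (ball z s)) := by
    refine ⟨hfm.restrict, ?_⟩
    rw [eLpNorm_eq_lintegral_rpow_enorm_toReal (by norm_num) (by norm_num)]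
    have : ∀ w : ℂ, ‖f w‖ₑ ^ ((2:ℝ≥0∞).toReal) = ENNReal.ofReal (‖f w‖ ^ (2:ℝ)) := by
      intro w
      rw [ENNReal.toReal_ofNat, ← ofReal_norm,
        ENNReal.ofReal_rpow_of_nonneg (norm_nonneg _) (by norm_num)]
    simp only [this]
    exact ENNReal.rpow_lt_top_of_nonneg (by positivity) (hfl z s hs).ne
  exact hm.integrable one_le_two

private lemma aux_core (f : ℂ → ℂ) (hfm : AEStronglyMeasurable f MeasureTheory.volume)
    (z : ℂ) (R : ℝ) (hR : 0 < R) (hfi : IntegrableOn f (ball z R)) (c : ℂ) :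
    (∫⁻ w in ball z R, ENNReal.ofReal (‖f w -
        (((volume (ball z R)).toReal)⁻¹ • ∫ w in ball z R, f w)‖ ^ (2:ℝ))) ≤
      4 * ∫⁻ w in ball z R, ENNReal.ofReal (‖f w - c‖ ^ (2:ℝ)) := by
  set m : ℂ := ((volume (ball z R)).toReal)⁻¹ • ∫ w in ball z R, f w with hm
  set V : ℝ≥0∞ := volume (ball z R) with hV
  have hV0 : V ≠ 0 := (measure_ball_pos _ _ hR).ne'
  have hVt : V ≠ ⊤ := measure_ball_lt_top.ne
  have hVtr : 0 < V.toReal := ENNReal.toReal_pos hV0 hVt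
  set I2c : ℝ≥0∞ := ∫⁻ w in ball z R, ENNReal.ofReal (‖f w - c‖ ^ (2:ℝ)) with hI2c
  set L1 : ℝ≥0∞ := ∫⁻ w in ball z R, ENNReal.ofReal ‖f w - c‖ with hL1
  have hfc : IntegrableOn (fun w => f w - c) (ball z R) :=
    hfi.sub (integrableOn_const measure_ball_lt_top.ne)
  have hfcm : AEMeasurable (fun w => ENNReal.ofReal ‖f w - c‖) (volume.restrict (ball z R)) :=
    (ENNReal.measurable_ofReal.comp_aemeasurable
      ((hfm.restrict.sub aestronglyMeasurable_const).norm.aemeasurable))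
  have holder : L1 ≤ I2c ^ (1/2 : ℝ) * V ^ (1/2 : ℝ) := by
    have key := ENNReal.lintegral_mul_le_Lp_mul_Lq (volume.restrict (ball z R))
      Real.HolderConjugate.two_two
      hfcm (aemeasurable_const (b := (1:ℝ≥0∞)))
    simp only [Pi.mul_apply, mul_one, ENNReal.one_rpow, lintegral_const,
      Measure.restrict_apply MeasurableSet.univ, Set.univ_inter] at key
    have e1 : ∀ w : ℂ, ENNReal.ofReal ‖f w - c‖ ^ (2:ℝ) = ENNReal.ofReal (‖f w - c‖ ^ (2:ℝ)) :=
      fun w => ENNReal.ofReal_rpow_of_nonneg (norm_nonneg _) (by norm_num)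
    simp only [e1] at key
    simpa only [one_mul, ← hL1, ← hI2c, ← hV] using key
  have hcm : ENNReal.ofReal ‖c - m‖ ≤ V⁻¹ * L1 := by
    have hreal : ‖c - m‖ ≤ V.toReal⁻¹ * ∫ w in ball z R, ‖f w - c‖ := by
      have hc_int : c - m = V.toReal⁻¹ • (∫ w in ball z R, (c - f w)) := by
        rw [hm, integral_sub (integrableOn_const (C := c) measure_ball_lt_top.ne) hfi,
          smul_sub, setIntegral_const, measureReal_def, ← hV, smul_smul, inv_mul_cancel₀ hVtr.ne', one_smul]
      rw [hc_int, norm_smul, Real.norm_eq_abs,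
        _root_.abs_of_nonneg (by positivity : (0:ℝ) ≤ V.toReal⁻¹)]
      gcongr
      calc ‖∫ w in ball z R, (c - f w)‖ ≤ ∫ w in ball z R, ‖c - f w‖ :=
            norm_integral_le_integral_norm _
        _ = ∫ w in ball z R, ‖f w - c‖ := by simp_rw [norm_sub_rev]
    calc ENNReal.ofReal ‖c - m‖ ≤ ENNReal.ofReal (V.toReal⁻¹ * ∫ w in ball z R, ‖f w - c‖) :=
          ENNReal.ofReal_le_ofReal hreal
      _ = ENNReal.ofReal V.toReal⁻¹ * ENNReal.ofReal (∫ w in ball z R, ‖f w - c‖) :=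
          ENNReal.ofReal_mul (by positivity)
      _ = V⁻¹ * L1 := by
          rw [ENNReal.ofReal_inv_of_pos hVtr, ENNReal.ofReal_toReal hVt,
            ofReal_integral_eq_lintegral_ofReal hfc.norm
              (Filter.Eventually.of_forall fun w => norm_nonneg _)]
  have hsq : ENNReal.ofReal (‖c - m‖ ^ (2:ℝ)) ≤ V⁻¹ * I2c := by
    have h1 : ENNReal.ofReal (‖c - m‖ ^ (2:ℝ)) = (ENNReal.ofReal ‖c - m‖) ^ (2:ℝ) :=
      (ENNReal.ofReal_rpow_of_nonneg (norm_nonneg _) (by norm_num)).symm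
    have h2 : (ENNReal.ofReal ‖c - m‖) ^ (2:ℝ) ≤ (V⁻¹ * L1) ^ (2:ℝ) :=
      ENNReal.rpow_le_rpow hcm (by norm_num)
    have h3 : (V⁻¹ * L1) ^ (2:ℝ) ≤ (V⁻¹)^(2:ℝ) * (I2c ^ (1/2:ℝ) * V ^ (1/2:ℝ)) ^ (2:ℝ) := by
      rw [ENNReal.mul_rpow_of_nonneg _ _ (by norm_num : (0:ℝ) ≤ 2)]
      gcongr
    have sq2 : ∀ a : ℝ≥0∞, a ^ (2:ℝ) = a * a := fun a => by
      rw [show (2:ℝ) = ((2:ℕ):ℝ) by norm_num, ENNReal.rpow_natCast, sq]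
    have hrp : ∀ a : ℝ≥0∞, a ^ (1/2:ℝ) * a ^ (1/2:ℝ) = a := by
      intro a
      rw [← ENNReal.rpow_add_of_nonneg _ _ (by norm_num) (by norm_num)]
      norm_num
    have h4 : (V⁻¹)^(2:ℝ) * (I2c ^ (1/2:ℝ) * V ^ (1/2:ℝ)) ^ (2:ℝ) = V⁻¹ * I2c := by
      rw [ENNReal.mul_rpow_of_nonneg _ _ (by norm_num : (0:ℝ) ≤ 2), sq2, sq2, sq2]
      calc V⁻¹ * V⁻¹ * (I2c ^ (1/2:ℝ) * I2c ^ (1/2:ℝ) * (V ^ (1/2:ℝ) * V ^ (1/2:ℝ)))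
          = V⁻¹ * V⁻¹ * (I2c * V) := by rw [hrp, hrp]
        _ = (V⁻¹ * I2c) * (V⁻¹ * V) := by ring
        _ = V⁻¹ * I2c := by rw [ENNReal.inv_mul_cancel hV0 hVt, mul_one]
    calc ENNReal.ofReal (‖c - m‖ ^ (2:ℝ)) = (ENNReal.ofReal ‖c - m‖) ^ (2:ℝ) := h1
      _ ≤ (V⁻¹ * L1) ^ (2:ℝ) := h2
      _ ≤ (V⁻¹)^(2:ℝ) * (I2c ^ (1/2:ℝ) * V ^ (1/2:ℝ)) ^ (2:ℝ) := h3
      _ = V⁻¹ * I2c := h4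
  have hpt : ∀ w : ℂ, ENNReal.ofReal (‖f w - m‖ ^ (2:ℝ)) ≤
      2 * ENNReal.ofReal (‖f w - c‖ ^ (2:ℝ)) + 2 * ENNReal.ofReal (‖c - m‖ ^ (2:ℝ)) := by
    intro w
    have hre : ‖f w - m‖ ^ (2:ℝ) ≤ 2 * ‖f w - c‖ ^ (2:ℝ) + 2 * ‖c - m‖ ^ (2:ℝ) := by
      rw [Real.rpow_two, Real.rpow_two, Real.rpow_two]
      have htri : ‖f w - m‖ ≤ ‖f w - c‖ + ‖c - m‖ := norm_sub_le_norm_sub_add_norm_sub _ _ _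
      nlinarith [htri, sq_nonneg (‖f w - c‖ - ‖c - m‖), norm_nonneg (f w - m),
        norm_nonneg (f w - c), norm_nonneg (c - m)]
    calc ENNReal.ofReal (‖f w - m‖ ^ (2:ℝ))
        ≤ ENNReal.ofReal (2 * ‖f w - c‖ ^ (2:ℝ) + 2 * ‖c - m‖ ^ (2:ℝ)) :=
          ENNReal.ofReal_le_ofReal hre
      _ = 2 * ENNReal.ofReal (‖f w - c‖ ^ (2:ℝ)) + 2 * ENNReal.ofReal (‖c - m‖ ^ (2:ℝ)) := by
          rw [ENNReal.ofReal_add (by positivity) (by positivity),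
            ENNReal.ofReal_mul (by norm_num), ENNReal.ofReal_mul (by norm_num)]
          norm_num
  calc (∫⁻ w in ball z R, ENNReal.ofReal (‖f w - m‖ ^ (2:ℝ)))
      ≤ ∫⁻ w in ball z R, (2 * ENNReal.ofReal (‖f w - c‖ ^ (2:ℝ)) +
          2 * ENNReal.ofReal (‖c - m‖ ^ (2:ℝ))) := lintegral_mono hpt
    _ = 2 * I2c + 2 * ENNReal.ofReal (‖c - m‖ ^ (2:ℝ)) * V := by
        rw [lintegral_add_left']
        · rw [lintegral_const_mul' _ _ (by norm_num), lintegral_const,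
            Measure.restrict_apply MeasurableSet.univ, Set.univ_inter, ← hV, ← hI2c, mul_assoc]
        · have hnm : AEMeasurable (fun w => ‖f w - c‖ ^ (2:ℝ)) (volume.restrict (ball z R)) :=
            Measurable.comp_aemeasurable (g := fun y : ℝ => y ^ (2:ℝ)) (by fun_prop)
              ((hfm.restrict.sub aestronglyMeasurable_const).norm.aemeasurable)
          exact (ENNReal.measurable_ofReal.comp_aemeasurable hnm).const_mul 2
    _ ≤ 2 * I2c + 2 * (V⁻¹ * I2c) * V := by gcongr
    _ = 2 * I2c + 2 * I2c * (V⁻¹ * V) := by ring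
    _ = 4 * I2c := by rw [ENNReal.inv_mul_cancel hV0 hVt, mul_one]; ring

private lemma aux_int_cont (f : ℂ → ℂ) (hfm : AEStronglyMeasurable f MeasureTheory.volume)
    (hfi : ∀ (z : ℂ) (s : ℝ), 0 < s → IntegrableOn f (ball z s))
    (R : ℂ → ℝ) (hRc : Continuous R) (hRp : ∀ z, 0 < R z) :
    Continuous fun z => ∫ w in ball z (R z), f w := by
  rw [continuous_iff_continuousAt]
  intro z₀
  have hrewrite : ∀ z : ℂ, (∫ w in ball z (R z), f w) =
      ∫ w, (ball z (R z)).indicator f w := fun z =>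
    (integral_indicator measurableSet_ball).symm
  simp only [ContinuousAt, hrewrite]
  set bound : ℂ → ℝ := (ball z₀ (R z₀ + 2)).indicator fun w => ‖f w‖ with hbd
  have hev : ∀ᶠ z in nhds z₀, dist z z₀ < 1 ∧ R z < R z₀ + 1 := by
    apply Filter.Eventually.and
    · exact (Metric.tendsto_nhds.mp Filter.tendsto_id) 1 one_pos |>.mono (fun z h => by
        simpa [dist_comm] using h)
    · exact (hRc.continuousAt (x := z₀)).eventually_lt continuousAt_const (by linarith)
  apply tendsto_integral_filter_of_dominated_convergence bound
  · exact Filter.Eventually.of_forall fun z => hfm.indicator measurableSet_ball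
  · filter_upwards [hev] with z hz
    apply Filter.Eventually.of_forall
    intro w
    by_cases hw : w ∈ ball z (R z)
    · have hw2 : w ∈ ball z₀ (R z₀ + 2) := by
        rw [mem_ball] at hw ⊢
        calc dist w z₀ ≤ dist w z + dist z z₀ := dist_triangle _ _ _
          _ < R z + 1 := by linarith [hz.1]
          _ < R z₀ + 2 := by linarith [hz.2]
      rw [Set.indicator_of_mem hw, hbd, Set.indicator_of_mem hw2]
    · rw [Set.indicator_of_notMem hw]
      simp only [norm_zero, hbd]
      exact Set.indicator_apply_nonneg fun _ => norm_nonneg _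
  · rw [hbd, integrable_indicator_iff measurableSet_ball]
    exact (hfi z₀ (R z₀ + 2) (by linarith [hRp z₀])).norm
  · have hsph : (volume (sphere z₀ (R z₀)) : ℝ≥0∞) = 0 :=
      Measure.addHaar_sphere volume z₀ (R z₀)
    filter_upwards [compl_mem_ae_iff.mpr hsph] with w hw
    simp only [mem_compl_iff, mem_sphere_iff_norm] at hw
    rcases lt_or_gt_of_ne (fun h : dist w z₀ = R z₀ => hw (by rwa [dist_eq_norm] at h)) with hlt | hgt
    · have hev2 : ∀ᶠ z in nhds z₀, dist w z < R z :=
        (continuous_const.dist continuous_id).continuousAt.eventually_lt hRc.continuousAt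
          (by simpa using hlt)
      rw [Set.indicator_of_mem (mem_ball.mpr hlt)]
      refine Filter.Tendsto.congr' ?_ tendsto_const_nhds
      filter_upwards [hev2] with z h
      rw [Set.indicator_of_mem (mem_ball.mpr h)]
    · have hev2 : ∀ᶠ z in nhds z₀, R z < dist w z :=
        hRc.continuousAt.eventually_lt (continuous_const.dist continuous_id).continuousAt
          (by simpa using hgt)
      rw [Set.indicator_of_notMem (by simpa [mem_ball] using not_lt.mpr hgt.le)]
      refine Filter.Tendsto.congr' ?_ tendsto_const_nhds
      filter_upwards [hev2] with z h
      rw [Set.indicator_of_notMem (by simpa [mem_ball] using not_lt.mpr h.le)]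

private lemma aux_avgC_cont (f : ℂ → ℂ) (hfm : AEStronglyMeasurable f MeasureTheory.volume)
    (hfi : ∀ (z : ℂ) (s : ℝ), 0 < s → IntegrableOn f (ball z s))
    (ρ : ℂ → ℝ) (hρc : Continuous ρ) (hρp : ∀ z, 0 < ρ z) (r : ℝ) (hr : 0 < r) :
    Continuous (avgC ρ r f) := by
  have hRc : Continuous fun z => r * ρ z := continuous_const.mul hρc
  have hRp : ∀ z, 0 < r * ρ z := fun z => mul_pos hr (hρp z)
  have hvol : ∀ z : ℂ, (volume (ball z (r * ρ z))).toReal =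
      (r * ρ z) ^ Module.finrank ℝ ℂ * (volume (ball (0:ℂ) 1)).toReal := by
    intro z
    rw [Measure.addHaar_ball volume z (hRp z).le, ENNReal.toReal_mul,
      ENNReal.toReal_ofReal (pow_nonneg (hRp z).le _)]
  have hinv : Continuous fun z => ((volume (ball z (r * ρ z))).toReal)⁻¹ := by
    simp only [hvol]
    apply Continuous.inv₀
    · exact (hRc.pow _).mul continuous_const
    · intro z
      have h1 : (0:ℝ) < (volume (ball (0:ℂ) 1)).toReal :=
        ENNReal.toReal_pos (measure_ball_pos _ _ one_pos).ne' measure_ball_lt_top.ne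
      have := hRp z
      positivity
  exact hinv.smul (aux_int_cont f hfm hfi _ hRc hRp)

private lemma aux_lpN_mono {p : ℝ} (hp : 0 < p) {g h : ℂ → ℝ≥0∞} (H : ∀ z, g z ≤ h z) :
    lpN p g ≤ lpN p h :=
  ENNReal.rpow_le_rpow (lintegral_mono fun z => ENNReal.rpow_le_rpow (H z) hp.le)
    (by positivity)

private lemma aux_lpN_two {p : ℝ} (hp : 0 < p) (g : ℂ → ℝ≥0∞) :
    lpN p (fun z => 2 * g z) = 2 * lpN p g := by
  unfold lpN
  simp_rw [ENNReal.mul_rpow_of_nonneg _ _ hp.le]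
  rw [lintegral_const_mul' _ _ (ENNReal.rpow_ne_top_of_nonneg hp.le (by norm_num)),
    ENNReal.mul_rpow_of_nonneg _ _ (by positivity), ← ENNReal.rpow_mul,
    mul_one_div, div_self hp.ne', ENNReal.rpow_one]

end Aux

/-- characterization of `IMO^{p,2,α}_r`. -/
theorem stmt8 (p α r : ℝ) (hp : 0 < p) (hr : 0 < r)
    (φ : ℂ → ℝ) (hφ : ContDiff ℝ (⊤ : ℕ∞) φ) (hsub : ∀ z, 0 ≤ lapl φ z)
    (hne : muOf φ ≠ 0) (C₀ : ℝ≥0∞) (hC₀ : 1 < C₀)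
    (hdbl : ∀ (z : ℂ) (s : ℝ), 0 < s → muOf φ (ball z (2 * s)) ≤ C₀ * muOf φ (ball z s))
    (ρ : ℂ → ℝ) (hρ : ∀ z, 0 < ρ z ∧ muOf φ (ball z (ρ z)) = 1)
    (f : ℂ → ℂ) (hfm : AEStronglyMeasurable f MeasureTheory.volume)
    (hfl : ∀ (z : ℂ) (s : ℝ), 0 < s →
      (∫⁻ w in ball z s, ENNReal.ofReal (‖f w‖ ^ (2 : ℝ))) < ⊤) :
    lpN p (fun z => ENNReal.ofReal (ρ z ^ α) * MO2 ρ r f z) < ⊤ ↔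
      ∃ c : ℂ → ℂ, Continuous c ∧
        lpN p (fun z => ENNReal.ofReal (ρ z ^ α) *
          avgq ρ 2 r (fun w => f w - c z) z) < ⊤ := by
  have hρp : ∀ z, 0 < ρ z := fun z => (hρ z).1
  have hfi : ∀ (z : ℂ) (s : ℝ), 0 < s → IntegrableOn f (ball z s) := aux_intOn f hfm hfl
  constructor
  · intro h
    have hpos := aux_pos (muOf φ) hne C₀ hdbl
    have hρc : Continuous ρ := aux_rho_cont (muOf φ) hpos ρ hρ
    exact ⟨avgC ρ r f, aux_avgC_cont f hfm hfi ρ hρc hρp r hr, h⟩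
  · rintro ⟨c, _, hfin⟩
    have hbound : ∀ z, ENNReal.ofReal (ρ z ^ α) * MO2 ρ r f z ≤
        2 * (ENNReal.ofReal (ρ z ^ α) * avgq ρ 2 r (fun w => f w - c z) z) := by
      intro z
      have hRz : 0 < r * ρ z := mul_pos hr (hρp z)
      have hcore := aux_core f hfm z (r * ρ z) hRz (hfi z _ hRz) (c z)
      have hMO : MO2 ρ r f z ≤ 2 * avgq ρ 2 r (fun w => f w - c z) z := by
        unfold MO2 avgq avgC
        set V : ℝ≥0∞ := volume (ball z (r * ρ z)) with hV
        set I2m : ℝ≥0∞ := ∫⁻ w in ball z (r * ρ z), ENNReal.ofReal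
          (‖f w - ((volume (ball z (r * ρ z))).toReal)⁻¹ • ∫ w in ball z (r * ρ z), f w‖ ^ (2:ℝ))
          with hI2m
        set I2c : ℝ≥0∞ := ∫⁻ w in ball z (r * ρ z), ENNReal.ofReal (‖f w - c z‖ ^ (2:ℝ)) with hI2c
        calc (I2m / V) ^ (1/(2:ℝ)) ≤ (4 * I2c / V) ^ (1/(2:ℝ)) := by
              apply ENNReal.rpow_le_rpow _ (by norm_num)
              exact ENNReal.div_le_div_right hcore V
          _ = (4 * (I2c / V)) ^ (1/(2:ℝ)) := by rw [mul_div_assoc]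
          _ = (4:ℝ≥0∞) ^ (1/(2:ℝ)) * (I2c / V) ^ (1/(2:ℝ)) :=
              ENNReal.mul_rpow_of_nonneg _ _ (by norm_num)
          _ = 2 * (I2c / V) ^ (1/(2:ℝ)) := by
              congr 1
              rw [show (4:ℝ≥0∞) = 2 ^ (2:ℕ) by norm_num, ← ENNReal.rpow_natCast,
                ← ENNReal.rpow_mul]
              norm_num
      calc ENNReal.ofReal (ρ z ^ α) * MO2 ρ r f z
          ≤ ENNReal.ofReal (ρ z ^ α) * (2 * avgq ρ 2 r (fun w => f w - c z) z) :=
            mul_le_mul_right hMO _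
        _ = 2 * (ENNReal.ofReal (ρ z ^ α) * avgq ρ 2 r (fun w => f w - c z) z) := by ring
    calc lpN p (fun z => ENNReal.ofReal (ρ z ^ α) * MO2 ρ r f z)
        ≤ lpN p (fun z => 2 * (ENNReal.ofReal (ρ z ^ α) *
            avgq ρ 2 r (fun w => f w - c z) z)) := aux_lpN_mono hp hbound
      _ = 2 * lpN p (fun z => ENNReal.ofReal (ρ z ^ α) *
            avgq ρ 2 r (fun w => f w - c z) z) := aux_lpN_two hp _
      _ < ⊤ := ENNReal.mul_lt_top (by norm_num) hfin
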